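/- arXiv:2008.05546 — 2 statements merged into one kernel-verified Lean document; each statement's English description precedes it below -/
import Mathlib

section
/- If Z is a complex n×n matrix such that the Hermitian part Z^h = (Z + Z†)/2 is positive semidefinite, and G = (Z − I)(Z + I)⁻¹ is defined (with Z + I invertible), then I − G†G is positive semidefinite. -/
open Matrix ComplexOrder

/-- Cayley transform of a positive-real (immittance) matrix is a bounded-real
(scattering) matrix: if `Z + Zᴴ` is positive semidefinite and `Z + 1` is
invertible, then for `G = (Z − 1)(Z + 1)⁻¹` the matrix `1 − Gᴴ G` is positive
semidefinite. -/
theorem cayley_immittance_to_scattering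
    (n : ℕ) (Z : Matrix (Fin n) (Fin n) ℂ)
    (hZ : (Z + Zᴴ).PosSemidef) (hinv : IsUnit (Z + 1)) :
    (1 - ((Z - 1) * (Z + 1)⁻¹)ᴴ * ((Z - 1) * (Z + 1)⁻¹)).PosSemidef := by
  have hd : IsUnit (Z + 1).det := (Matrix.isUnit_iff_isUnit_det _).mp hinv
  have h1 : (Z + 1) * (Z + 1)⁻¹ = 1 := Matrix.mul_nonsing_inv _ hd
  have h2 : ((Z + 1)⁻¹)ᴴ * (Z + 1)ᴴ = 1 := by
    rw [← conjTranspose_mul, h1, conjTranspose_one]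
  have key : 1 - ((Z - 1) * (Z + 1)⁻¹)ᴴ * ((Z - 1) * (Z + 1)⁻¹)
      = ((Z + 1)⁻¹)ᴴ * ((Z + Zᴴ) + (Z + Zᴴ)) * (Z + 1)⁻¹ := by
    have expand : (Z + Zᴴ) + (Z + Zᴴ) = (Z + 1)ᴴ * (Z + 1) - (Z - 1)ᴴ * (Z - 1) := by
      simp only [conjTranspose_add, conjTranspose_sub, conjTranspose_one]
      noncomm_ring
    rw [expand]
    conv_rhs => rw [Matrix.mul_sub, Matrix.sub_mul, ← Matrix.mul_assoc, h2, Matrix.one_mul, h1]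
    rw [conjTranspose_mul]
    simp [Matrix.mul_assoc]
  rw [key]
  exact (hZ.add hZ).conjTranspose_mul_mul_same _
end

section
/- For the damped oscillator susceptibility χ(ω) = ω_p²/(ω₀² − ω² − iγω) with ω₀, γ, ω_p > 0, the sum rule ∫_0^∞ ω · Im χ(ω) dω = (π/2)·ω_p² holds. -/
open MeasureTheory Real Set Filter Topology

lemma lsr_D_pos (ω₀ γ : ℝ) (hω₀ : 0 < ω₀) (hγ : 0 < γ) (ω : ℝ) :
    0 < (ω₀ ^ 2 - ω ^ 2) ^ 2 + γ ^ 2 * ω ^ 2 := by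
  rcases eq_or_ne ω 0 with rfl | hω
  · simp; positivity
  · have h : 0 < γ ^ 2 * ω ^ 2 := by positivity
    nlinarith [sq_nonneg (ω₀ ^ 2 - ω ^ 2)]

lemma lsr_core (ω₀ γ : ℝ) (hω₀ : 0 < ω₀) (hγ : 0 < γ) :
    ∫ ω in Ioi (0 : ℝ), γ * ω ^ 2 / ((ω₀ ^ 2 - ω ^ 2) ^ 2 + γ ^ 2 * ω ^ 2) = π / 2 := by
  set D : ℝ → ℝ := fun ω => (ω₀ ^ 2 - ω ^ 2) ^ 2 + γ ^ 2 * ω ^ 2 with hD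
  have hDpos : ∀ ω, 0 < D ω := lsr_D_pos ω₀ γ hω₀ hγ
  have hDcont : Continuous D := by fun_prop
  set f : ℝ → ℝ := fun ω => γ * ω ^ 2 / D ω with hf
  set g' : ℝ → ℝ := fun ω => γ * (ω ^ 2 + ω₀ ^ 2) / D ω with hg'
  set F : ℝ → ℝ := fun ω => if ω ≤ 0 then -(π/2) else arctan ((ω ^ 2 - ω₀ ^ 2) / (γ * ω))
    with hF
  have hfcont : Continuous f := by
    exact (continuous_const.mul (continuous_pow 2)).div hDcont fun x => (hDpos x).ne'
  have hfnn : ∀ x, 0 ≤ f x := fun x => div_nonneg (by positivity) (hDpos x).le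
  -- derivative of F on Ioi 0
  have hderiv : ∀ x ∈ Ioi (0:ℝ), HasDerivAt F (g' x) x := by
    intro x hx
    have hx0 : (0:ℝ) < x := hx
    have hu : HasDerivAt (fun ω : ℝ => (ω ^ 2 - ω₀ ^ 2) / (γ * ω))
        ((2 * x * (γ * x) - (x ^ 2 - ω₀ ^ 2) * γ) / (γ * x) ^ 2) x := by
      have h1 : HasDerivAt (fun ω : ℝ => ω ^ 2 - ω₀ ^ 2) (2 * x) x := by
        simpa using ((hasDerivAt_pow 2 x).sub_const (ω₀ ^ 2))
      have h2 : HasDerivAt (fun ω : ℝ => γ * ω) γ x := by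
        simpa using (hasDerivAt_id x).const_mul γ
      exact h1.div h2 (by positivity)
    have harc := (Real.hasDerivAt_arctan ((x ^ 2 - ω₀ ^ 2) / (γ * x))).comp x hu
    have heq : F =ᶠ[𝓝 x] fun ω => arctan ((ω ^ 2 - ω₀ ^ 2) / (γ * ω)) := by
      filter_upwards [Ioi_mem_nhds hx0] with ω hω
      simp [hF, not_le.2 (show (0:ℝ) < ω from hω)]
    refine HasDerivAt.congr_of_eventuallyEq ?_ heq
    refine HasDerivAt.congr_deriv harc ?_
    have hDx : D x ≠ 0 := (hDpos x).ne'
    simp only [hg', hD] at *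
    field_simp
    ring
  have g'pos : ∀ x ∈ Ioi (0:ℝ), 0 ≤ g' x := by
    intro x hx
    exact div_nonneg (by positivity) (hDpos x).le
  -- continuity within Ici 0 at 0
  have hcont : ContinuousWithinAt F (Ici (0:ℝ)) 0 := by
    have hu : Tendsto (fun ω : ℝ => (ω ^ 2 - ω₀ ^ 2) / (γ * ω)) (𝓝[>] (0:ℝ)) atBot := by
      have hnum : Tendsto (fun ω : ℝ => ω ^ 2 - ω₀ ^ 2) (𝓝[>] (0:ℝ)) (𝓝 (-(ω₀ ^ 2))) := by
        have h : Tendsto (fun ω : ℝ => ω ^ 2 - ω₀ ^ 2) (𝓝 (0:ℝ)) (𝓝 ((0:ℝ) ^ 2 - ω₀ ^ 2)) :=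
          ((continuous_pow 2).sub continuous_const).tendsto 0
        simpa using h.mono_left nhdsWithin_le_nhds
      have hden : Tendsto (fun ω : ℝ => (γ * ω)⁻¹) (𝓝[>] (0:ℝ)) atTop := by
        apply tendsto_inv_nhdsGT_zero.comp
        apply tendsto_nhdsWithin_of_tendsto_nhds_of_eventually_within
        · simpa using ((continuous_mul_left γ).tendsto (0:ℝ)).mono_left
            nhdsWithin_le_nhds
        · filter_upwards [self_mem_nhdsWithin] with ω hω
          exact mul_pos hγ hω
      have := hnum.neg_mul_atTop (neg_neg_iff_pos.2 (by positivity) : -(ω₀ ^ 2) < (0:ℝ)) hden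
      exact this.congr fun ω => (div_eq_mul_inv _ _).symm
    have h1 : Tendsto F (𝓝[>] (0:ℝ)) (𝓝 (-(π/2))) := by
      have := (Real.tendsto_arctan_atBot.mono_right nhdsWithin_le_nhds).comp hu
      refine this.congr' ?_
      filter_upwards [self_mem_nhdsWithin] with ω hω
      simp [hF, not_le.2 (show (0:ℝ) < ω from hω), Function.comp]
    have hF0 : F 0 = -(π/2) := by simp [hF]
    rw [ContinuousWithinAt, ← Ioi_insert, nhdsWithin_insert, hF0]
    exact tendsto_sup.2 ⟨tendsto_pure_nhds F 0 |>.congr (fun _ => rfl) |>.mono_right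
      (by rw [hF0]), h1⟩
  -- limit at infinity
  have htop : Tendsto F atTop (𝓝 (π/2)) := by
    have hu : Tendsto (fun ω : ℝ => (ω ^ 2 - ω₀ ^ 2) / (γ * ω)) atTop atTop := by
      have h1 : Tendsto (fun ω : ℝ => ω / γ - ω₀ ^ 2 / (γ * ω)) atTop atTop := by
        have ha : Tendsto (fun ω : ℝ => ω / γ) atTop atTop :=
          tendsto_id.atTop_div_const hγ
        have hb : Tendsto (fun ω : ℝ => ω₀ ^ 2 / (γ * ω)) atTop (𝓝 0) := by
          apply Tendsto.div_atTop tendsto_const_nhds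
          exact (tendsto_id.const_mul_atTop hγ)
        simpa using ha.atTop_add (hb.neg.congr fun ω => rfl) |>.congr fun ω => by ring
      refine h1.congr' ?_
      filter_upwards [eventually_gt_atTop (0:ℝ)] with ω hω
      field_simp
    have := (Real.tendsto_arctan_atTop.mono_right nhdsWithin_le_nhds).comp hu
    refine this.congr' ?_
    filter_upwards [eventually_gt_atTop (0:ℝ)] with ω hω
    simp [hF, not_le.2 hω, Function.comp]
  -- value of ∫ g'
  have hIg' : IntegrableOn g' (Ioi (0:ℝ)) :=
    integrableOn_Ioi_deriv_of_nonneg hcont hderiv g'pos htop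
  have hval : ∫ x in Ioi (0:ℝ), g' x = π := by
    rw [integral_Ioi_of_hasDerivAt_of_nonneg hcont hderiv g'pos htop]
    simp [hF]
  -- integrability of f and of the companion
  have hIf : IntegrableOn f (Ioi (0:ℝ)) := by
    refine hIg'.mono' hfcont.aestronglyMeasurable.restrict (Eventually.of_forall fun x => ?_)
    rw [Real.norm_eq_abs, abs_of_nonneg (hfnn x)]
    exact (div_le_div_iff_of_pos_right (hDpos x)).mpr (by nlinarith)
  set h2 : ℝ → ℝ := fun x => ω₀ ^ 2 / x ^ 2 * f x with hh2
  have hIh2 : IntegrableOn h2 (Ioi (0:ℝ)) := by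
    have hmeas : AEStronglyMeasurable h2 (volume.restrict (Ioi (0:ℝ))) := by
      apply ContinuousOn.aestronglyMeasurable _ measurableSet_Ioi
      apply ContinuousOn.mul _ hfcont.continuousOn
      exact ContinuousOn.div continuousOn_const (continuous_pow 2).continuousOn
        fun x hx => pow_ne_zero 2 (ne_of_gt hx)
    refine hIg'.mono' hmeas ?_
    rw [ae_restrict_iff' measurableSet_Ioi]
    refine Eventually.of_forall fun x hx => ?_
    have hx0 : (0:ℝ) < x := hx
    have hnn : 0 ≤ h2 x := mul_nonneg (by positivity) (hfnn x)
    rw [Real.norm_eq_abs, abs_of_nonneg hnn]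
    have heq : h2 x = γ * ω₀ ^ 2 / D x := by
      simp only [hh2, hf]
      field_simp
    rw [heq]
    exact (div_le_div_iff_of_pos_right (hDpos x)).mpr (by nlinarith)
  -- substitution ω ↦ ω₀²/ω
  have hsub : ∫ x in Ioi (0:ℝ), f x = ∫ x in Ioi (0:ℝ), h2 x := by
    have hφ : ∀ x ∈ Ioi (0:ℝ), HasDerivWithinAt (fun x : ℝ => ω₀ ^ 2 / x)
        (-(ω₀ ^ 2 / x ^ 2)) (Ioi (0:ℝ)) x := by
      intro x hx
      have hx0 : (0:ℝ) < x := hx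
      have : HasDerivAt (fun x : ℝ => ω₀ ^ 2 / x) (ω₀ ^ 2 * (-(x ^ 2)⁻¹)) x := by
        simpa [div_eq_mul_inv] using (hasDerivAt_inv hx0.ne').const_mul (ω₀ ^ 2)
      refine (this.congr_deriv ?_).hasDerivWithinAt
      field_simp
    have hinj : InjOn (fun x : ℝ => ω₀ ^ 2 / x) (Ioi (0:ℝ)) := by
      intro x hx y hy hxy
      have hx0 : (0:ℝ) < x := hx
      have hy0 : (0:ℝ) < y := hy
      have hω0 : ω₀ ^ 2 ≠ 0 := by positivity
      field_simp at hxy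
      exact hxy.symm
    have himg : (fun x : ℝ => ω₀ ^ 2 / x) '' Ioi (0:ℝ) = Ioi (0:ℝ) := by
      ext y
      constructor
      · rintro ⟨x, hx, rfl⟩
        exact div_pos (by positivity : (0:ℝ) < ω₀ ^ 2) hx
      · intro hy
        refine ⟨ω₀ ^ 2 / y, div_pos (by positivity : (0:ℝ) < ω₀ ^ 2) hy, ?_⟩
        field_simp
    have key := integral_image_eq_integral_abs_deriv_smul measurableSet_Ioi hφ hinj f
    rw [himg] at key
    rw [key]
    refine setIntegral_congr_fun measurableSet_Ioi fun x hx => ?_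
    have hx0 : (0:ℝ) < x := hx
    have hfinv : f (ω₀ ^ 2 / x) = f x := by
      have h1 := (hDpos x).ne'
      have h2' := (hDpos (ω₀ ^ 2 / x)).ne'
      simp only [hf, hD] at h1 h2' ⊢
      field_simp
      ring
    rw [smul_eq_mul, abs_neg, abs_of_nonneg (by positivity : (0:ℝ) ≤ ω₀ ^ 2 / x ^ 2), hfinv]
  -- combine
  have hsum : ∫ x in Ioi (0:ℝ), g' x
      = (∫ x in Ioi (0:ℝ), f x) + ∫ x in Ioi (0:ℝ), h2 x := by
    rw [← integral_add hIf hIh2]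
    refine setIntegral_congr_fun measurableSet_Ioi fun x hx => ?_
    have hx0 : (0:ℝ) < x := hx
    have hDx := (hDpos x).ne'
    simp only [hg', hh2, hf, hD, Pi.add_apply] at *
    field_simp
  have : (2:ℝ) * ∫ x in Ioi (0:ℝ), f x = π := by
    rw [← hval, hsum, ← hsub]; ring
  simp only [hf, hD] at this
  linarith

/-- Sum rule for the damped oscillator susceptibility
`χ(ω) = ω_p²/(ω₀² − ω² − iγω)`:
`∫_0^∞ ω · Im χ(ω) dω = (π/2)·ω_p²`. -/
theorem lorentz_sum_rule
    (ω₀ γ ωp : ℝ) (hω₀ : 0 < ω₀) (hγ : 0 < γ) (hωp : 0 < ωp) :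
    ∫ ω in Ioi (0 : ℝ),
        ω * (ωp ^ 2 * γ * ω / ((ω₀ ^ 2 - ω ^ 2) ^ 2 + γ ^ 2 * ω ^ 2)) =
      π / 2 * ωp ^ 2 := by
  calc ∫ ω in Ioi (0 : ℝ),
        ω * (ωp ^ 2 * γ * ω / ((ω₀ ^ 2 - ω ^ 2) ^ 2 + γ ^ 2 * ω ^ 2))
      = ∫ ω in Ioi (0 : ℝ),
        ωp ^ 2 * (γ * ω ^ 2 / ((ω₀ ^ 2 - ω ^ 2) ^ 2 + γ ^ 2 * ω ^ 2)) := by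
        congr 1; funext ω; ring
    _ = ωp ^ 2 * (π / 2) := by rw [integral_const_mul, lsr_core ω₀ γ hω₀ hγ]
    _ = π / 2 * ωp ^ 2 := by ring
end
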